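/- Let w ∈ W be a non-spiral element of the affine Weyl group of type Ã₂, let δ ∈ {α₁,α₂,α̃}, and let ε ∈ {0,1} be such that H_{δ,ε} is nearer to wq than H_{δ,1−ε} (i.e., |(δ,wq) − ε| < |(δ,wq) − (1−ε)|). Then s_{δ,ε}w < w in the Bruhat order. -/

import Mathlib

noncomputable section

open scoped RealInnerProductSpace

/-- The plane `V = ℝ²`. -/
abbrev V : Type := EuclideanSpace ℝ (Fin 2)

/-- The affine reflection in the hyperplane `H_{α,k}`. -/
def sRefl (α : V) (k : ℤ) (v : V) : V := v - (⟪α, v⟫ - (k : ℝ)) • α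

/-- The positive roots `α₁, α₂, α̃ = α₁ + α₂` of the `A₂` root system. -/
def PosRoots (a1 a2 : V) : Set V := {a1, a2, a1 + a2}

/-- The root system `Φ` of type `A₂`. -/
def Phi (a1 a2 : V) : Set V := {α | α ∈ PosRoots a1 a2 ∨ -α ∈ PosRoots a1 a2}

/-- A permutation of `V` acting as the affine reflection `s_{α,k}` for some `α ∈ Φ`, `k ∈ ℤ`. -/
def IsAffRefl (a1 a2 : V) (g : Equiv.Perm V) : Prop :=
  ∃ α ∈ Phi a1 a2, ∃ k : ℤ, ∀ v : V, g v = sRefl α k v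

/-- The affine Weyl group of type `Ã₂`: the group of (affine) transformations of `V`
generated by all the affine reflections `s_{α,k}`, `α ∈ Φ`, `k ∈ ℤ`. -/
def AffWeyl (a1 a2 : V) : Subgroup (Equiv.Perm V) :=
  Subgroup.closure {g | IsAffRefl a1 a2 g}

/-- The action of an element of the affine Weyl group on the plane `V`. -/
def act {a1 a2 : V} (w : AffWeyl a1 a2) (v : V) : V := (w : Equiv.Perm V) v

/-- `g` is one of the simple reflections `s₁ = s_{α₁,0}`, `s₂ = s_{α₂,0}`, `s₀ = s_{α̃,1}`. -/
def IsSimpleRefl (a1 a2 : V) (g : Equiv.Perm V) : Prop :=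
  (∀ v : V, g v = sRefl a1 0 v) ∨ (∀ v : V, g v = sRefl a2 0 v) ∨
    (∀ v : V, g v = sRefl (a1 + a2) 1 v)

/-- The length function of the affine Weyl group `W` of type `Ã₂`, with respect to the
simple reflections. -/
def len (a1 a2 : V) (w : AffWeyl a1 a2) : ℕ :=
  sInf {n | ∃ l : List (AffWeyl a1 a2),
    (∀ g ∈ l, IsSimpleRefl a1 a2 (g : Equiv.Perm V)) ∧ l.length = n ∧ l.prod = w}

/-- The reflections of `W` are the `s_{α,k}`, `α ∈ Φ`, `k ∈ ℤ`. -/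
def IsReflW (a1 a2 : V) (g : Equiv.Perm V) : Prop := IsAffRefl a1 a2 g

/-- The Bruhat order on `W`: the partial order generated by `u < r * u` whenever `r` is a
reflection and `ℓ(u) < ℓ(r * u)`. -/
def BruhatLE (a1 a2 : V) (x w : AffWeyl a1 a2) : Prop :=
  Relation.ReflTransGen
    (fun a b => ∃ r : AffWeyl a1 a2, IsReflW a1 a2 (r : Equiv.Perm V) ∧ b = r * a ∧
      len a1 a2 a < len a1 a2 b) x w

/-- The strict Bruhat order. -/
def BruhatLT (a1 a2 : V) (x w : AffWeyl a1 a2) : Prop := BruhatLE a1 a2 x w ∧ x ≠ w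

/-- The fundamental alcove `A₀`. -/
def A0 (a1 a2 : V) : Set V :=
  {v | 0 < ⟪a1, v⟫ ∧ 0 < ⟪a2, v⟫ ∧ ⟪a1 + a2, v⟫ < 1}

/-- The fundamental `α`-root strip. -/
def Strip (α : V) : Set V := {v | 0 ≤ ⟪α, v⟫ ∧ ⟪α, v⟫ ≤ 1}

/-- The union of the three fundamental root strips. -/
def StripUnion (a1 a2 : V) : Set V := Strip a1 ∪ Strip a2 ∪ Strip (a1 + a2)

/-- `w` is spiral if the alcove center `w q` lies in a fundamental root strip. -/
def IsSpiral (a1 a2 q : V) (w : AffWeyl a1 a2) : Prop :=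
  (w : Equiv.Perm V) q ∈ StripUnion a1 a2

/-- The chambers: connected components of the complement of the union of the fundamental
root strips. -/
def IsChamber (a1 a2 : V) (C : Set V) : Prop :=
  ∃ v ∈ (StripUnion a1 a2)ᶜ, C = connectedComponentIn (StripUnion a1 a2)ᶜ v

/-- The chamber containing the alcove center `w q` (for non-spiral `w`). -/
def chamberOf (a1 a2 q : V) (w : AffWeyl a1 a2) : Set V :=
  connectedComponentIn (StripUnion a1 a2)ᶜ ((w : Equiv.Perm V) q)

/-- The root hyperplane (line) `H_{α,k}`. -/
def Hplane (α : V) (k : ℤ) : Set V := {v | ⟪α, v⟫ = (k : ℝ)}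

/-- `H_{α,i}` (with `α` a positive root and `i ∈ {0,1}`) is a wall of the chamber `C`:
the boundary of `C` meets `H_{α,i}` in more than one point (a ray). -/
def IsWall (a1 a2 : V) (C : Set V) (α : V) (i : ℤ) : Prop :=
  α ∈ PosRoots a1 a2 ∧ (i = 0 ∨ i = 1) ∧
    ∃ u ∈ frontier C ∩ Hplane α i, ∃ v ∈ frontier C ∩ Hplane α i, u ≠ v

/-- A chamber is even if both of its walls are among the fixed hyperplanes
`H_{α₁,0}, H_{α₂,0}, H_{α̃,1}` of the simple reflections. -/
def IsEvenChamber (a1 a2 : V) (C : Set V) : Prop :=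
  IsChamber a1 a2 C ∧ ∀ α i, IsWall a1 a2 C α i →
    ((α = a1 ∧ i = 0) ∨ (α = a2 ∧ i = 0) ∨ (α = a1 + a2 ∧ i = 1))

/-- `q^w_x = n^w_x - ℓ(w)`, where `n^w_x` is the number of reflections `r` with `r x ≤ w`. -/
def qInt (a1 a2 : V) (w x : AffWeyl a1 a2) : ℤ :=
  (Set.ncard {r : AffWeyl a1 a2 |
      IsReflW a1 a2 (r : Equiv.Perm V) ∧ BruhatLE a1 a2 (r * x) w} : ℤ)
    - (len a1 a2 w : ℤ)

/-- The root `α ∈ Φ` points into the chamber `C`. -/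
def PointsInto (a1 a2 : V) (C : Set V) (α : V) : Prop :=
  α ∈ Phi a1 a2 ∧ ∀ v ∈ C, v + α ∈ C

/-- `L(w)`: the subgroup generated by the simple reflections `s` with `s w < w`. -/
def Lsub (a1 a2 : V) (w : AffWeyl a1 a2) : Subgroup (AffWeyl a1 a2) :=
  Subgroup.closure {s | IsSimpleRefl a1 a2 (s : Equiv.Perm V) ∧ BruhatLT a1 a2 (s * w) w}

/-- `w` is twisted spiral if `w = z s` with `z` spiral of even length, `s` simple, and
`ℓ(w) = ℓ(z) + 1`. -/
def IsTwistedSpiral (a1 a2 q : V) (w : AffWeyl a1 a2) : Prop :=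
  ∃ z s : AffWeyl a1 a2, IsSpiral a1 a2 q z ∧ Even (len a1 a2 z) ∧
    IsSimpleRefl a1 a2 (s : Equiv.Perm V) ∧ w = z * s ∧ len a1 a2 w = len a1 a2 z + 1

lemma inner_sRefl (b α : V) (k : ℤ) (v : V) :
    ⟪b, sRefl α k v⟫ = ⟪b, v⟫ - (⟪α, v⟫ - (k:ℝ)) * ⟪b, α⟫ := by
  simp [sRefl, inner_sub_right, real_inner_smul_right]

lemma sRefl_neg (α : V) (k : ℤ) (v : V) : sRefl (-α) k v = sRefl α (-k) v := by
  simp only [sRefl, inner_neg_left]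
  push_cast
  module

lemma sRefl_invol (α : V) (hα : ⟪α, α⟫ = 2) (k : ℤ) (v : V) :
    sRefl α k (sRefl α k v) = v := by
  simp only [sRefl, inner_sub_right, real_inner_smul_right, hα]
  module

section Main
variable (a1 a2 : V)

lemma phi_norm (h11 : ⟪a1,a1⟫ = 2) (h22 : ⟪a2,a2⟫ = 2) (h12 : ⟪a1,a2⟫ = -1) :
    ∀ α ∈ Phi a1 a2, ⟪α, α⟫ = 2 := by
  have h21 : ⟪a2,a1⟫ = -1 := by rw [real_inner_comm]; exact h12
  have hnn : ∀ b : V, ⟪-b, -b⟫ = ⟪b,b⟫ := by intro b; simp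
  intro α hα
  rcases hα with h | h <;> simp only [PosRoots, Set.mem_insert_iff, Set.mem_singleton_iff] at h
  · rcases h with rfl | rfl | rfl
    · exact h11
    · exact h22
    · simp only [inner_add_left, inner_add_right, h11, h22, h12, h21]; ring
  · have : α = -a1 ∨ α = -a2 ∨ α = -(a1+a2) := by
      rcases h with h | h | h
      · left; rw [← h]; simp
      · right; left; rw [← h]; simp
      · right; right; rw [← h]; simp
    rcases this with rfl | rfl | rfl
    · rw [hnn]; exact h11
    · rw [hnn]; exact h22
    · rw [hnn]; simp only [inner_add_left, inner_add_right, h11, h22, h12, h21]; ring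

/-- the six linear parts in the (⟪a1,·⟫,⟪a2,·⟫)-coordinates -/
def ML : List (ℤ×ℤ×ℤ×ℤ) := [(1,0,0,1),(-1,0,1,1),(1,1,0,-1),(0,-1,-1,0),(-1,-1,1,0),(0,1,-1,-1)]

def AffRep (g : Equiv.Perm V) : Prop :=
  ∃ m : ℤ×ℤ×ℤ×ℤ, ∃ t : ℤ×ℤ, m ∈ ML ∧ (3 ∣ t.1 - t.2) ∧
    ∀ v : V, ⟪a1, g v⟫ = m.1*⟪a1,v⟫ + m.2.1*⟪a2,v⟫ + t.1 ∧
             ⟪a2, g v⟫ = m.2.2.1*⟪a1,v⟫ + m.2.2.2*⟪a2,v⟫ + t.2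

def mulM (p q : ℤ×ℤ×ℤ×ℤ) : ℤ×ℤ×ℤ×ℤ :=
  (p.1*q.1 + p.2.1*q.2.2.1, p.1*q.2.1 + p.2.1*q.2.2.2,
   p.2.2.1*q.1 + p.2.2.2*q.2.2.1, p.2.2.1*q.2.1 + p.2.2.2*q.2.2.2)

lemma ML_mul : ∀ p ∈ ML, ∀ q ∈ ML, mulM p q ∈ ML := by decide

lemma ML_lat : ∀ p ∈ ML, 3 ∣ p.1 + p.2.1 - p.2.2.1 - p.2.2.2 := by decide

lemma rep_mul {g h : Equiv.Perm V} (hg : AffRep a1 a2 g) (hh : AffRep a1 a2 h) :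
    AffRep a1 a2 (g * h) := by
  obtain ⟨p, s, hpM, hps, hpf⟩ := hg
  obtain ⟨r, t, hrM, hrt, hrf⟩ := hh
  refine ⟨mulM p r, (p.1*t.1 + p.2.1*t.2 + s.1, p.2.2.1*t.1 + p.2.2.2*t.2 + s.2),
    ML_mul p hpM r hrM, ?_, ?_⟩
  · obtain ⟨u, hu⟩ := hps
    obtain ⟨w, hw⟩ := hrt
    obtain ⟨z, hz⟩ := ML_lat p hpM
    refine ⟨z*t.2 + w*(p.1-p.2.2.1) + u, ?_⟩
    linear_combination t.2*hz + (p.1-p.2.2.1)*hw + hu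
  · intro v
    have hv := hrf v
    have hgv := hpf (h v)
    constructor
    · rw [Equiv.Perm.mul_apply, hgv.1, hv.1, hv.2, mulM]; push_cast; ring
    · rw [Equiv.Perm.mul_apply, hgv.2, hv.1, hv.2, mulM]; push_cast; ring

lemma posroots_cases {α : V} (h : α ∈ PosRoots a1 a2) : α = a1 ∨ α = a2 ∨ α = a1 + a2 := by
  simpa [PosRoots, Set.mem_insert_iff, Set.mem_singleton_iff] using h

lemma rep_gen (h11 : ⟪a1,a1⟫ = 2) (h22 : ⟪a2,a2⟫ = 2) (h12 : ⟪a1,a2⟫ = -1)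
    {g : Equiv.Perm V} (hg : IsAffRefl a1 a2 g) : AffRep a1 a2 g := by
  have h21 : ⟪a2,a1⟫ = -1 := by rw [real_inner_comm]; exact h12
  obtain ⟨α, hα, k, hk⟩ := hg
  -- reduce to positive roots
  have key : ∀ β ∈ PosRoots a1 a2, ∀ j : ℤ, (∀ v, g v = sRefl β j v) → AffRep a1 a2 g := by
    intro β hβ j hj
    rcases posroots_cases a1 a2 hβ with rfl | rfl | rfl
    · refine ⟨(-1,0,1,1), (2*j, -j), by simp [ML], by omega, fun v => ?_⟩
      rw [hj v]
      constructor
      · rw [inner_sRefl, h11]; push_cast; ring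
      · rw [inner_sRefl, h21]; push_cast; ring
    · refine ⟨(1,1,0,-1), (-j, 2*j), by simp [ML], by omega, fun v => ?_⟩
      rw [hj v]
      constructor
      · rw [inner_sRefl, h12]; push_cast; ring
      · rw [inner_sRefl, h22]; push_cast; ring
    · have e1 : ⟪a1, a1 + a2⟫ = 1 := by rw [inner_add_right, h11, h12]; norm_num
      have e2 : ⟪a2, a1 + a2⟫ = 1 := by rw [inner_add_right, h21, h22]; norm_num
      have e3 : ∀ v : V, ⟪a1 + a2, v⟫ = ⟪a1, v⟫ + ⟪a2, v⟫ := fun v => inner_add_left _ _ _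
      refine ⟨(0,-1,-1,0), (j, j), by simp [ML], by omega, fun v => ?_⟩
      rw [hj v]
      constructor
      · rw [inner_sRefl, e1, e3]; push_cast; ring
      · rw [inner_sRefl, e2, e3]; push_cast; ring
  rcases hα with h | h
  · exact key α h k hk
  · refine key (-α) h (-k) (fun v => ?_)
    rw [hk v, ← sRefl_neg, neg_neg]

lemma rep_one : AffRep a1 a2 1 :=
  ⟨(1,0,0,1), (0,0), by simp [ML], by omega, fun v => by constructor <;> push_cast <;> simp⟩

lemma affrefl_inv (h11 : ⟪a1,a1⟫ = 2) (h22 : ⟪a2,a2⟫ = 2) (h12 : ⟪a1,a2⟫ = -1)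
    {g : Equiv.Perm V} (hg : IsAffRefl a1 a2 g) : g⁻¹ = g := by
  obtain ⟨α, hα, k, hk⟩ := hg
  have hn := phi_norm a1 a2 h11 h22 h12 α hα
  have : g * g = 1 := by
    ext v
    rw [Equiv.Perm.mul_apply, hk, hk, sRefl_invol α hn]
    rfl
  calc g⁻¹ = g⁻¹ * (g * g) := by rw [this, mul_one]
    _ = g := by group

/-- every element of the affine Weyl group is a product of affine reflections -/
lemma exists_word (h11 : ⟪a1,a1⟫ = 2) (h22 : ⟪a2,a2⟫ = 2) (h12 : ⟪a1,a2⟫ = -1)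
    {g : Equiv.Perm V} (hg : g ∈ AffWeyl a1 a2) :
    ∃ l : List (Equiv.Perm V), (∀ x ∈ l, IsAffRefl a1 a2 x) ∧ l.prod = g := by
  have hsym : ({g | IsAffRefl a1 a2 g} : Set (Equiv.Perm V)) ∪ {g | IsAffRefl a1 a2 g}⁻¹
      = {g | IsAffRefl a1 a2 g} := by
    apply Set.union_eq_self_of_subset_right
    intro x hx
    have hx' : IsAffRefl a1 a2 x⁻¹ := hx
    have := affrefl_inv a1 a2 h11 h22 h12 hx'
    rw [inv_inv] at this
    rw [Set.mem_setOf_eq, this]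
    exact hx'
  have : g ∈ (AffWeyl a1 a2).toSubmonoid := hg
  rw [AffWeyl, Subgroup.closure_toSubmonoid, hsym] at this
  obtain ⟨l, hl, hp⟩ := Submonoid.exists_list_of_mem_closure this
  exact ⟨l, hl, hp⟩

lemma rep_of_mem (h11 : ⟪a1,a1⟫ = 2) (h22 : ⟪a2,a2⟫ = 2) (h12 : ⟪a1,a2⟫ = -1)
    {g : Equiv.Perm V} (hg : g ∈ AffWeyl a1 a2) : AffRep a1 a2 g := by
  obtain ⟨l, hl, hp⟩ := exists_word a1 a2 h11 h22 h12 hg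
  subst hp
  clear hg
  induction l with
  | nil => exact rep_one a1 a2
  | cons x l ih =>
    rw [List.prod_cons]
    exact rep_mul a1 a2 (rep_gen a1 a2 h11 h22 h12 (hl x (by simp)))
      (ih (fun y hy => hl y (by simp [hy])))


def rP (α : V) (hα : ⟪α,α⟫ = 2) (k : ℤ) : Equiv.Perm V :=
  Function.Involutive.toPerm (sRefl α k) (sRefl_invol α hα k)

@[simp] lemma rP_apply (α : V) (hα : ⟪α,α⟫ = 2) (k : ℤ) (v : V) :
    rP α hα k v = sRefl α k v := rfl

lemma rP_inv (α : V) (hα : ⟪α,α⟫ = 2) (k : ℤ) : (rP α hα k)⁻¹ = rP α hα k :=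
  Equiv.ext fun _ => rfl

variable (a1 a2 : V)

lemma a1_mem_phi : a1 ∈ Phi a1 a2 := Or.inl (by simp [PosRoots])
lemma a2_mem_phi : a2 ∈ Phi a1 a2 := Or.inl (by simp [PosRoots])
lemma sum_mem_phi : a1 + a2 ∈ Phi a1 a2 := Or.inl (by simp [PosRoots])

lemma rP_mem {α : V} (hα : ⟪α,α⟫ = 2) (k : ℤ) (h : α ∈ Phi a1 a2) :
    rP α hα k ∈ AffWeyl a1 a2 :=
  Subgroup.subset_closure ⟨α, h, k, fun _ => rfl⟩

lemma norm_sum (h11 : ⟪a1,a1⟫ = 2) (h22 : ⟪a2,a2⟫ = 2) (h12 : ⟪a1,a2⟫ = -1) :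
    ⟪a1+a2, a1+a2⟫ = 2 := by
  have h21 : ⟪a2,a1⟫ = -1 := by rw [real_inner_comm]; exact h12
  rw [inner_add_left, inner_add_right, inner_add_right, h11, h22, h12, h21]
  norm_num

variable (h11 : ⟪a1,a1⟫ = 2) (h22 : ⟪a2,a2⟫ = 2) (h12 : ⟪a1,a2⟫ = -1)

def S1 : AffWeyl a1 a2 := ⟨rP a1 h11 0, rP_mem a1 a2 h11 0 (a1_mem_phi a1 a2)⟩
def S2 : AffWeyl a1 a2 := ⟨rP a2 h22 0, rP_mem a1 a2 h22 0 (a2_mem_phi a1 a2)⟩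
def S0 : AffWeyl a1 a2 :=
  ⟨rP (a1+a2) (norm_sum a1 a2 h11 h22 h12) 1, rP_mem a1 a2 _ 1 (sum_mem_phi a1 a2)⟩
def S3 : AffWeyl a1 a2 :=
  ⟨rP (a1+a2) (norm_sum a1 a2 h11 h22 h12) 0, rP_mem a1 a2 _ 0 (sum_mem_phi a1 a2)⟩
def TT : AffWeyl a1 a2 :=
  S0 a1 a2 h11 h22 h12 * S3 a1 a2 h11 h22 h12

def KK : Subgroup (AffWeyl a1 a2) :=
  Subgroup.closure {s : AffWeyl a1 a2 | IsSimpleRefl a1 a2 (s : Equiv.Perm V)}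

lemma S1_simple : IsSimpleRefl a1 a2 ((S1 a1 a2 h11 : AffWeyl a1 a2) : Equiv.Perm V) :=
  Or.inl fun _ => rfl
lemma S2_simple : IsSimpleRefl a1 a2 ((S2 a1 a2 h22 : AffWeyl a1 a2) : Equiv.Perm V) :=
  Or.inr (Or.inl fun _ => rfl)
lemma S0_simple : IsSimpleRefl a1 a2 ((S0 a1 a2 h11 h22 h12 : AffWeyl a1 a2) : Equiv.Perm V) :=
  Or.inr (Or.inr fun _ => rfl)

lemma S1_mem : S1 a1 a2 h11 ∈ KK a1 a2 :=
  Subgroup.subset_closure (S1_simple a1 a2 h11)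
lemma S2_mem : S2 a1 a2 h22 ∈ KK a1 a2 :=
  Subgroup.subset_closure (S2_simple a1 a2 h22)
lemma S0_mem : S0 a1 a2 h11 h22 h12 ∈ KK a1 a2 :=
  Subgroup.subset_closure (S0_simple a1 a2 h11 h22 h12)

lemma S3_eq : S3 a1 a2 h11 h22 h12 = S1 a1 a2 h11 * S2 a1 a2 h22 * S1 a1 a2 h11 := by
  have h21 : ⟪a2,a1⟫ = -1 := by rw [real_inner_comm]; exact h12
  apply Subtype.ext
  apply Equiv.ext
  intro v
  show sRefl (a1+a2) 0 v = sRefl a1 0 (sRefl a2 0 (sRefl a1 0 v))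
  simp only [sRefl, inner_sub_right, real_inner_smul_right, inner_add_left,
    inner_add_right, h11, h22, h12, h21]
  push_cast
  module

lemma S3_mem : S3 a1 a2 h11 h22 h12 ∈ KK a1 a2 := by
  rw [S3_eq a1 a2 h11 h22 h12]
  exact mul_mem (mul_mem (S1_mem a1 a2 h11) (S2_mem a1 a2 h22)) (S1_mem a1 a2 h11)

lemma TT_mem : TT a1 a2 h11 h22 h12 ∈ KK a1 a2 :=
  mul_mem (S0_mem a1 a2 h11 h22 h12) (S3_mem a1 a2 h11 h22 h12)

lemma TT_apply (v : V) :
    ((TT a1 a2 h11 h22 h12 : AffWeyl a1 a2) : Equiv.Perm V) v = v + (a1 + a2) := by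
  have h21 : ⟪a2,a1⟫ = -1 := by rw [real_inner_comm]; exact h12
  show sRefl (a1+a2) 1 (sRefl (a1+a2) 0 v) = v + (a1+a2)
  simp only [sRefl, inner_sub_right, real_inner_smul_right, inner_add_left,
    inner_add_right, h11, h22, h12, h21]
  push_cast
  module

lemma TT_inv_apply (v : V) :
    (((TT a1 a2 h11 h22 h12)⁻¹ : AffWeyl a1 a2) : Equiv.Perm V) v = v - (a1 + a2) := by
  have h : (((TT a1 a2 h11 h22 h12)⁻¹ : AffWeyl a1 a2) : Equiv.Perm V)
      = ((TT a1 a2 h11 h22 h12 : AffWeyl a1 a2) : Equiv.Perm V)⁻¹ := rfl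
  rw [h]
  apply ((TT a1 a2 h11 h22 h12 : AffWeyl a1 a2) : Equiv.Perm V).injective
  rw [← Equiv.Perm.mul_apply, mul_inv_cancel, Equiv.Perm.one_apply, TT_apply a1 a2 h11 h22 h12]
  abel

lemma TT_zpow_apply (n : ℤ) (v : V) :
    ((TT a1 a2 h11 h22 h12 ^ n : AffWeyl a1 a2) : Equiv.Perm V) v
      = v + (n : ℝ) • (a1 + a2) := by
  induction n using Int.induction_on generalizing v with
  | zero => simp
  | succ k ih =>
    rw [zpow_add_one]
    show ((TT a1 a2 h11 h22 h12 ^ (k:ℤ) : AffWeyl a1 a2) : Equiv.Perm V)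
      (((TT a1 a2 h11 h22 h12 : AffWeyl a1 a2) : Equiv.Perm V) v) = _
    rw [TT_apply a1 a2 h11 h22 h12, ih]
    push_cast
    module
  | pred k ih =>
    rw [zpow_sub_one]
    show ((TT a1 a2 h11 h22 h12 ^ (-k:ℤ) : AffWeyl a1 a2) : Equiv.Perm V)
      ((((TT a1 a2 h11 h22 h12)⁻¹ : AffWeyl a1 a2) : Equiv.Perm V) v) = _
    rw [TT_inv_apply a1 a2 h11 h22 h12, ih]
    push_cast
    module

lemma conj_formula (h11 : ⟪a1,a1⟫ = 2) (h22 : ⟪a2,a2⟫ = 2) (h12 : ⟪a1,a2⟫ = -1)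
    {B : AffWeyl a1 a2} {β : V} {j : ℤ}
    (hB : ∀ v, (B : Equiv.Perm V) v = sRefl β j v) {c : ℤ} (hc : ⟪β, a1+a2⟫ = (c:ℝ))
    (m : ℤ) (v : V) :
    ((TT a1 a2 h11 h22 h12 ^ m * B * TT a1 a2 h11 h22 h12 ^ (-m) : AffWeyl a1 a2) :
      Equiv.Perm V) v = sRefl β (j + m*c) v := by
  show ((TT a1 a2 h11 h22 h12 ^ m : AffWeyl a1 a2) : Equiv.Perm V)
    ((B : Equiv.Perm V) (((TT a1 a2 h11 h22 h12 ^ (-m) : AffWeyl a1 a2) : Equiv.Perm V) v))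
    = _
  rw [TT_zpow_apply a1 a2 h11 h22 h12, hB, TT_zpow_apply a1 a2 h11 h22 h12]
  simp only [sRefl, inner_add_right, real_inner_smul_right, hc]
  push_cast
  module

lemma gen_mem_K (h11 : ⟪a1,a1⟫ = 2) (h22 : ⟪a2,a2⟫ = 2) (h12 : ⟪a1,a2⟫ = -1)
    {g : Equiv.Perm V} (hgr : IsAffRefl a1 a2 g) (hg : g ∈ AffWeyl a1 a2) :
    (⟨g, hg⟩ : AffWeyl a1 a2) ∈ KK a1 a2 := by
  have h21 : ⟪a2,a1⟫ = -1 := by rw [real_inner_comm]; exact h12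
  have e1 : ⟪a1, a1+a2⟫ = ((1:ℤ):ℝ) := by
    rw [inner_add_right, h11, h12]; norm_num
  have e2 : ⟪a2, a1+a2⟫ = ((1:ℤ):ℝ) := by
    rw [inner_add_right, h21, h22]; norm_num
  have e3 : ⟪a1+a2, a1+a2⟫ = ((2:ℤ):ℝ) := by
    rw [norm_sum a1 a2 h11 h22 h12]; norm_num
  obtain ⟨α, hα, k, hk⟩ := hgr
  have key : ∀ β ∈ PosRoots a1 a2, ∀ j : ℤ, (∀ v, g v = sRefl β j v) →
      (⟨g, hg⟩ : AffWeyl a1 a2) ∈ KK a1 a2 := by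
    intro β hβ j hj
    rcases posroots_cases a1 a2 hβ with h | h | h <;> rw [h] at hj <;> clear h
    · have heq : (⟨g, hg⟩ : AffWeyl a1 a2)
          = TT a1 a2 h11 h22 h12 ^ j * S1 a1 a2 h11 * TT a1 a2 h11 h22 h12 ^ (-j) := by
        apply Subtype.ext; apply Equiv.ext; intro v
        rw [show ((⟨g, hg⟩ : AffWeyl a1 a2) : Equiv.Perm V) v = g v from rfl, hj v]
        rw [conj_formula a1 a2 h11 h22 h12 (B := S1 a1 a2 h11) (fun _ => rfl) e1 j v]
        norm_num
      rw [heq]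
      exact mul_mem (mul_mem (zpow_mem (TT_mem a1 a2 h11 h22 h12) j) (S1_mem a1 a2 h11))
        (zpow_mem (TT_mem a1 a2 h11 h22 h12) (-j))
    · have heq : (⟨g, hg⟩ : AffWeyl a1 a2)
          = TT a1 a2 h11 h22 h12 ^ j * S2 a1 a2 h22 * TT a1 a2 h11 h22 h12 ^ (-j) := by
        apply Subtype.ext; apply Equiv.ext; intro v
        rw [show ((⟨g, hg⟩ : AffWeyl a1 a2) : Equiv.Perm V) v = g v from rfl, hj v]
        rw [conj_formula a1 a2 h11 h22 h12 (B := S2 a1 a2 h22) (fun _ => rfl) e2 j v]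
        norm_num
      rw [heq]
      exact mul_mem (mul_mem (zpow_mem (TT_mem a1 a2 h11 h22 h12) j) (S2_mem a1 a2 h22))
        (zpow_mem (TT_mem a1 a2 h11 h22 h12) (-j))
    · rcases Int.even_or_odd j with ⟨m, hm⟩ | ⟨m, hm⟩
      · have heq : (⟨g, hg⟩ : AffWeyl a1 a2)
            = TT a1 a2 h11 h22 h12 ^ m * S3 a1 a2 h11 h22 h12
              * TT a1 a2 h11 h22 h12 ^ (-m) := by
          apply Subtype.ext; apply Equiv.ext; intro v
          rw [show ((⟨g, hg⟩ : AffWeyl a1 a2) : Equiv.Perm V) v = g v from rfl, hj v]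
          rw [conj_formula a1 a2 h11 h22 h12 (B := S3 a1 a2 h11 h22 h12) (fun _ => rfl) e3 m v]
          rw [hm]; ring_nf
        rw [heq]
        exact mul_mem (mul_mem (zpow_mem (TT_mem a1 a2 h11 h22 h12) m)
          (S3_mem a1 a2 h11 h22 h12)) (zpow_mem (TT_mem a1 a2 h11 h22 h12) (-m))
      · have heq : (⟨g, hg⟩ : AffWeyl a1 a2)
            = TT a1 a2 h11 h22 h12 ^ m * S0 a1 a2 h11 h22 h12
              * TT a1 a2 h11 h22 h12 ^ (-m) := by
          apply Subtype.ext; apply Equiv.ext; intro v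
          rw [show ((⟨g, hg⟩ : AffWeyl a1 a2) : Equiv.Perm V) v = g v from rfl, hj v]
          rw [conj_formula a1 a2 h11 h22 h12 (B := S0 a1 a2 h11 h22 h12) (fun _ => rfl) e3 m v]
          rw [hm]; ring_nf
        rw [heq]
        exact mul_mem (mul_mem (zpow_mem (TT_mem a1 a2 h11 h22 h12) m)
          (S0_mem a1 a2 h11 h22 h12)) (zpow_mem (TT_mem a1 a2 h11 h22 h12) (-m))
  rcases hα with h | h
  · exact key α h k hk
  · exact key (-α) h (-k) (fun v => by rw [hk v, ← sRefl_neg, neg_neg])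

lemma mem_K_all (h11 : ⟪a1,a1⟫ = 2) (h22 : ⟪a2,a2⟫ = 2) (h12 : ⟪a1,a2⟫ = -1)
    (w : AffWeyl a1 a2) : w ∈ KK a1 a2 := by
  obtain ⟨l, hl, hp⟩ := exists_word a1 a2 h11 h22 h12 w.2
  have main : ∀ l : List (Equiv.Perm V), (∀ x ∈ l, IsAffRefl a1 a2 x) →
      ∀ h : l.prod ∈ AffWeyl a1 a2, (⟨l.prod, h⟩ : AffWeyl a1 a2) ∈ KK a1 a2 := by
    intro l
    induction l with
    | nil =>
      intro _ h
      have h1 : (⟨List.prod [], h⟩ : AffWeyl a1 a2) = 1 := by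
        apply Subtype.ext; simp
      rw [h1]; exact one_mem _
    | cons x l ih =>
      intro hx h
      have hxm : x ∈ AffWeyl a1 a2 := Subgroup.subset_closure (hx x (by simp))
      have hlm : l.prod ∈ AffWeyl a1 a2 := by
        have h2 : l.prod = x⁻¹ * (x :: l).prod := by rw [List.prod_cons]; group
        rw [h2]; exact mul_mem (inv_mem hxm) h
      have h3 : (⟨(x :: l).prod, h⟩ : AffWeyl a1 a2)
          = ⟨x, hxm⟩ * ⟨l.prod, hlm⟩ := by
        apply Subtype.ext
        show (x :: l).prod = x * l.prod
        exact List.prod_cons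
      rw [h3]
      exact mul_mem (gen_mem_K a1 a2 h11 h22 h12 (hx x (by simp)) hxm)
        (ih (fun y hy => hx y (by simp [hy])) hlm)
  have hm := main l hl (by rw [hp]; exact w.2)
  have he : (⟨l.prod, by rw [hp]; exact w.2⟩ : AffWeyl a1 a2) = w := Subtype.ext hp
  rwa [he] at hm

lemma simple_isrefl {g : Equiv.Perm V} (hs : IsSimpleRefl a1 a2 g) : IsAffRefl a1 a2 g := by
  rcases hs with h | h | h
  · exact ⟨a1, a1_mem_phi a1 a2, 0, h⟩
  · exact ⟨a2, a2_mem_phi a1 a2, 0, h⟩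
  · exact ⟨a1+a2, sum_mem_phi a1 a2, 1, h⟩

lemma simple_inv (h11 : ⟪a1,a1⟫ = 2) (h22 : ⟪a2,a2⟫ = 2) (h12 : ⟪a1,a2⟫ = -1)
    {s : AffWeyl a1 a2} (hs : IsSimpleRefl a1 a2 (s : Equiv.Perm V)) :
    s⁻¹ = s := by
  apply Subtype.ext
  show ((s : Equiv.Perm V))⁻¹ = (s : Equiv.Perm V)
  exact affrefl_inv a1 a2 h11 h22 h12 (simple_isrefl a1 a2 hs)

lemma simple_mul_self (h11 : ⟪a1,a1⟫ = 2) (h22 : ⟪a2,a2⟫ = 2) (h12 : ⟪a1,a2⟫ = -1)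
    {s : AffWeyl a1 a2} (hs : IsSimpleRefl a1 a2 (s : Equiv.Perm V)) :
    s * s = 1 := by
  nth_rewrite 1 [← simple_inv a1 a2 h11 h22 h12 hs]
  group

lemma word_simples (h11 : ⟪a1,a1⟫ = 2) (h22 : ⟪a2,a2⟫ = 2) (h12 : ⟪a1,a2⟫ = -1)
    (w : AffWeyl a1 a2) :
    ∃ l : List (AffWeyl a1 a2),
      (∀ s ∈ l, IsSimpleRefl a1 a2 (s : Equiv.Perm V)) ∧ l.prod = w := by
  have hrev : ∀ l : List (AffWeyl a1 a2), (∀ s ∈ l, IsSimpleRefl a1 a2 (s : Equiv.Perm V)) →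
      l.reverse.prod = l.prod⁻¹ := by
    intro l
    induction l with
    | nil => simp
    | cons x l ih =>
      intro hx
      rw [List.reverse_cons, List.prod_append, List.prod_cons, List.prod_nil, mul_one,
        ih (fun y hy => hx y (by simp [hy])), List.prod_cons, mul_inv_rev]
      rw [simple_inv a1 a2 h11 h22 h12 (hx x (by simp))]
  have hw := mem_K_all a1 a2 h11 h22 h12 w
  rw [KK] at hw
  induction hw using Subgroup.closure_induction with
  | mem x hx => exact ⟨[x], by simpa using hx, by simp⟩
  | one => exact ⟨[], by simp, by simp⟩
  | mul x y hx hy ihx ihy =>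
    obtain ⟨lx, hlx, hpx⟩ := ihx
    obtain ⟨ly, hly, hpy⟩ := ihy
    refine ⟨lx ++ ly, ?_, by rw [List.prod_append, hpx, hpy]⟩
    intro s hs
    rcases List.mem_append.mp hs with h | h
    · exact hlx s h
    · exact hly s h
  | inv x hx ih =>
    obtain ⟨lx, hlx, hpx⟩ := ih
    refine ⟨lx.reverse, ?_, by rw [hrev lx hlx, hpx]⟩
    intro s hs
    exact hlx s (List.mem_reverse.mp hs)



lemma len_spec (h11 : ⟪a1,a1⟫ = 2) (h22 : ⟪a2,a2⟫ = 2) (h12 : ⟪a1,a2⟫ = -1)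
    (w : AffWeyl a1 a2) :
    ∃ l : List (AffWeyl a1 a2), (∀ g ∈ l, IsSimpleRefl a1 a2 (g : Equiv.Perm V)) ∧
      l.length = len a1 a2 w ∧ l.prod = w := by
  have hne : {n | ∃ l : List (AffWeyl a1 a2),
      (∀ g ∈ l, IsSimpleRefl a1 a2 (g : Equiv.Perm V)) ∧ l.length = n ∧
        l.prod = w}.Nonempty := by
    obtain ⟨l, hl, hp⟩ := word_simples a1 a2 h11 h22 h12 w
    exact ⟨l.length, l, hl, rfl, hp⟩
  exact Nat.sInf_mem hne

lemma len_le {w : AffWeyl a1 a2} {l : List (AffWeyl a1 a2)}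
    (hl : ∀ g ∈ l, IsSimpleRefl a1 a2 (g : Equiv.Perm V)) (hp : l.prod = w) :
    len a1 a2 w ≤ l.length :=
  Nat.sInf_le ⟨l, hl, rfl, hp⟩

lemma len_one : len a1 a2 1 = 0 :=
  Nat.le_zero.mp (len_le a1 a2 (l := []) (by simp) (by simp))

lemma len_mul_simple_le (h11 : ⟪a1,a1⟫ = 2) (h22 : ⟪a2,a2⟫ = 2) (h12 : ⟪a1,a2⟫ = -1)
    {s : AffWeyl a1 a2} (hs : IsSimpleRefl a1 a2 (s : Equiv.Perm V))
    (w : AffWeyl a1 a2) : len a1 a2 (s * w) ≤ len a1 a2 w + 1 := by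
  obtain ⟨l, hl, hlen, hp⟩ := len_spec a1 a2 h11 h22 h12 w
  have : len a1 a2 (s * w) ≤ (s :: l).length := by
    apply len_le a1 a2
    · intro g hg
      rcases List.mem_cons.mp hg with rfl | h
      · exact hs
      · exact hl g h
    · rw [List.prod_cons, hp]
  simpa [hlen] using this

lemma len_self_le_mul_simple (h11 : ⟪a1,a1⟫ = 2) (h22 : ⟪a2,a2⟫ = 2) (h12 : ⟪a1,a2⟫ = -1)
    {s : AffWeyl a1 a2} (hs : IsSimpleRefl a1 a2 (s : Equiv.Perm V))
    (w : AffWeyl a1 a2) : len a1 a2 w ≤ len a1 a2 (s * w) + 1 := by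
  have h := len_mul_simple_le a1 a2 h11 h22 h12 hs (s * w)
  rwa [← mul_assoc, simple_mul_self a1 a2 h11 h22 h12 hs, one_mul] at h

lemma coord_inj (h11 : ⟪a1,a1⟫ = 2) (h22 : ⟪a2,a2⟫ = 2) (h12 : ⟪a1,a2⟫ = -1)
    {u v : V} (hx : ⟪a1,u⟫ = ⟪a1,v⟫) (hy : ⟪a2,u⟫ = ⟪a2,v⟫) : u = v := by
  have h21 : ⟪a2,a1⟫ = -1 := by rw [real_inner_comm]; exact h12
  have hli : LinearIndependent ℝ ![a1, a2] := by
    rw [LinearIndependent.pair_iff]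
    intro s t hst
    have e1 : ⟪a1, s • a1 + t • a2⟫ = (0:ℝ) := by rw [hst]; simp
    have e2 : ⟪a2, s • a1 + t • a2⟫ = (0:ℝ) := by rw [hst]; simp
    rw [inner_add_right, real_inner_smul_right, real_inner_smul_right, h11, h12] at e1
    rw [inner_add_right, real_inner_smul_right, real_inner_smul_right, h21, h22] at e2
    constructor <;> linarith
  have hsp : Submodule.span ℝ ({a1, a2} : Set V) = ⊤ := by
    apply Submodule.eq_top_of_finrank_eq
    have hr : ({a1, a2} : Set V) = Set.range ![a1, a2] := by
      simp [Matrix.range_cons, Matrix.range_empty, Set.pair_comm]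
    rw [hr, finrank_span_eq_card hli]
    simp [finrank_euclideanSpace]
  have hm : u - v ∈ Submodule.span ℝ ({a1, a2} : Set V) := by
    rw [hsp]; trivial
  obtain ⟨s, t, hst⟩ := Submodule.mem_span_pair.mp hm
  have z1 : ⟪a1, u - v⟫ = (0:ℝ) := by rw [inner_sub_right, hx, sub_self]
  have z2 : ⟪a2, u - v⟫ = (0:ℝ) := by rw [inner_sub_right, hy, sub_self]
  have hz : ⟪u - v, u - v⟫ = (0:ℝ) := by
    nth_rewrite 1 [← hst]
    rw [inner_add_left, real_inner_smul_left, real_inner_smul_left, z1, z2]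
    ring
  have := inner_self_eq_zero.mp hz
  rw [sub_eq_zero] at this
  exact this

/-- the separating-hyperplane count -/
def NN (a1 a2 q : V) (w : AffWeyl a1 a2) : ℕ :=
  (⌊⟪a1, (w : Equiv.Perm V) q⟫⌋.natAbs + ⌊⟪a2, (w : Equiv.Perm V) q⟫⌋.natAbs
    + ⌊⟪a1, (w : Equiv.Perm V) q⟫ + ⟪a2, (w : Equiv.Perm V) q⟫⌋.natAbs : ℕ)

lemma fl13 (X : ℤ) : ⌊(X:ℝ) + 1/3⌋ = X := by
  rw [add_comm, Int.floor_add_intCast]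
  norm_num
lemma fl23 (X : ℤ) : ⌊(X:ℝ) + 2/3⌋ = X := by
  rw [add_comm, Int.floor_add_intCast]
  norm_num

lemma coord_floors (h11 : ⟪a1,a1⟫ = 2) (h22 : ⟪a2,a2⟫ = 2) (h12 : ⟪a1,a2⟫ = -1)
    (q : V) (hq1 : ⟪a1, q⟫ = 1/3) (hq2 : ⟪a2, q⟫ = 1/3) (w : AffWeyl a1 a2) :
    ∃ X Y Z : ℤ, ∃ f g : ℝ, (f = 1/3 ∨ f = 2/3) ∧ (g = 1/3 ∨ g = 2/3) ∧
      ⟪a1, (w : Equiv.Perm V) q⟫ = X + f ∧ ⟪a2, (w : Equiv.Perm V) q⟫ = Y + f ∧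
      ⟪a1, (w : Equiv.Perm V) q⟫ + ⟪a2, (w : Equiv.Perm V) q⟫ = Z + g ∧
      (Z = X + Y ∨ Z = X + Y + 1) ∧
      NN a1 a2 q w = X.natAbs + Y.natAbs + Z.natAbs := by
  obtain ⟨m, t, hm, hd, hf⟩ := rep_of_mem a1 a2 h11 h22 h12 w.2
  obtain ⟨hfx, hfy⟩ := hf q
  rw [hq1, hq2] at hfx hfy
  have main : ∀ X Y Z : ℤ, ∀ f g : ℝ, (f = 1/3 ∨ f = 2/3) → (g = 1/3 ∨ g = 2/3) →
      ⟪a1, (w : Equiv.Perm V) q⟫ = X + f → ⟪a2, (w : Equiv.Perm V) q⟫ = Y + f →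
      ⟪a1, (w : Equiv.Perm V) q⟫ + ⟪a2, (w : Equiv.Perm V) q⟫ = Z + g →
      (Z = X + Y ∨ Z = X + Y + 1) →
      ∃ X Y Z : ℤ, ∃ f g : ℝ, (f = 1/3 ∨ f = 2/3) ∧ (g = 1/3 ∨ g = 2/3) ∧
      ⟪a1, (w : Equiv.Perm V) q⟫ = X + f ∧ ⟪a2, (w : Equiv.Perm V) q⟫ = Y + f ∧
      ⟪a1, (w : Equiv.Perm V) q⟫ + ⟪a2, (w : Equiv.Perm V) q⟫ = Z + g ∧
      (Z = X + Y ∨ Z = X + Y + 1) ∧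
      NN a1 a2 q w = X.natAbs + Y.natAbs + Z.natAbs := by
    intro X Y Z f g hfv hgv hx hy hz hZ
    refine ⟨X, Y, Z, f, g, hfv, hgv, hx, hy, hz, hZ, ?_⟩
    have e1 : ⌊⟪a1, (w : Equiv.Perm V) q⟫⌋ = X := by
      rcases hfv with rfl | rfl
      · rw [hx]; exact fl13 X
      · rw [hx]; exact fl23 X
    have e2 : ⌊⟪a2, (w : Equiv.Perm V) q⟫⌋ = Y := by
      rcases hfv with rfl | rfl
      · rw [hy]; exact fl13 Y
      · rw [hy]; exact fl23 Y
    have e3 : ⌊⟪a1, (w : Equiv.Perm V) q⟫ + ⟪a2, (w : Equiv.Perm V) q⟫⌋ = Z := by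
      rcases hgv with rfl | rfl
      · rw [hz]; exact fl13 Z
      · rw [hz]; exact fl23 Z
    rw [NN, e1, e2, e3]
  simp only [ML, List.mem_cons, List.not_mem_nil, or_false] at hm
  rcases hm with rfl | rfl | rfl | rfl | rfl | rfl
  · exact main t.1 t.2 (t.1+t.2) (1/3) (2/3) (by norm_num) (by norm_num)
      (by rw [hfx]; push_cast; ring) (by rw [hfy]; push_cast; ring)
      (by rw [hfx, hfy]; push_cast; ring) (by left; ring)
  · exact main (t.1-1) t.2 (t.1+t.2) (2/3) (1/3) (by norm_num) (by norm_num)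
      (by rw [hfx]; push_cast; ring) (by rw [hfy]; push_cast; ring)
      (by rw [hfx, hfy]; push_cast; ring) (by right; ring)
  · exact main t.1 (t.2-1) (t.1+t.2) (2/3) (1/3) (by norm_num) (by norm_num)
      (by rw [hfx]; push_cast; ring) (by rw [hfy]; push_cast; ring)
      (by rw [hfx, hfy]; push_cast; ring) (by right; ring)
  · exact main (t.1-1) (t.2-1) (t.1+t.2-1) (2/3) (1/3) (by norm_num) (by norm_num)
      (by rw [hfx]; push_cast; ring) (by rw [hfy]; push_cast; ring)
      (by rw [hfx, hfy]; push_cast; ring) (by right; ring)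
  · exact main (t.1-1) t.2 (t.1+t.2-1) (1/3) (2/3) (by norm_num) (by norm_num)
      (by rw [hfx]; push_cast; ring) (by rw [hfy]; push_cast; ring)
      (by rw [hfx, hfy]; push_cast; ring) (by left; ring)
  · exact main t.1 (t.2-1) (t.1+t.2-1) (1/3) (2/3) (by norm_num) (by norm_num)
      (by rw [hfx]; push_cast; ring) (by rw [hfy]; push_cast; ring)
      (by rw [hfx, hfy]; push_cast; ring) (by left; ring)

lemma eq_one_of_A0 (h11 : ⟪a1,a1⟫ = 2) (h22 : ⟪a2,a2⟫ = 2) (h12 : ⟪a1,a2⟫ = -1)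
    (q : V) (hq1 : ⟪a1, q⟫ = 1/3) (hq2 : ⟪a2, q⟫ = 1/3) (w : AffWeyl a1 a2)
    (hx0 : 0 < ⟪a1, (w : Equiv.Perm V) q⟫) (hx1 : ⟪a1, (w : Equiv.Perm V) q⟫ < 1)
    (hy0 : 0 < ⟪a2, (w : Equiv.Perm V) q⟫) (hy1 : ⟪a2, (w : Equiv.Perm V) q⟫ < 1)
    (hs1 : ⟪a1, (w : Equiv.Perm V) q⟫ + ⟪a2, (w : Equiv.Perm V) q⟫ < 1) :
    w = 1 := by
  obtain ⟨m, t, hm, hd, hf⟩ := rep_of_mem a1 a2 h11 h22 h12 w.2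
  obtain ⟨hfx, hfy⟩ := hf q
  rw [hq1, hq2] at hfx hfy
  simp only [ML, List.mem_cons, List.not_mem_nil, or_false] at hm
  have tbound : ∀ s : ℤ, ∀ c : ℝ, (s:ℝ) = c → -1 < c → c < 1 → s = 0 := by
    intro s c hc h1 h2
    have b1 : (-1:ℝ) < (s:ℝ) := by rw [hc]; exact h1
    have b2 : (s:ℝ) < 1 := by rw [hc]; exact h2
    have b1' : (-1:ℤ) < s := by exact_mod_cast b1
    have b2' : s < (1:ℤ) := by exact_mod_cast b2
    omega
  rcases hm with rfl | rfl | rfl | rfl | rfl | rfl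
  · -- identity matrix : t = 0 and w = 1
    have hx : ⟪a1, (w : Equiv.Perm V) q⟫ = 1/3 + t.1 := by rw [hfx]; push_cast; ring
    have hy : ⟪a2, (w : Equiv.Perm V) q⟫ = 1/3 + t.2 := by rw [hfy]; push_cast; ring
    have ht1 : t.1 = 0 := tbound t.1 (t.1:ℝ) rfl (by rw [hx] at hx0; linarith)
      (by rw [hx] at hx1; linarith)
    have ht2 : t.2 = 0 := tbound t.2 (t.2:ℝ) rfl (by rw [hy] at hy0; linarith)
      (by rw [hy] at hy1; linarith)
    apply Subtype.ext
    apply Equiv.ext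
    intro v
    obtain ⟨e1, e2⟩ := hf v
    rw [ht1] at e1
    rw [ht2] at e2
    show (w : Equiv.Perm V) v = v
    apply coord_inj a1 a2 h11 h22 h12
    · rw [e1]; push_cast; ring
    · rw [e2]; push_cast; ring
  · -- A1 : x = -1/3 + t1 so t1 = 1, x = 2/3 ; y = 2/3 ; x+y = 4/3 > 1
    exfalso
    have hx : ⟪a1, (w : Equiv.Perm V) q⟫ = -1/3 + t.1 := by rw [hfx]; push_cast; ring
    have hy : ⟪a2, (w : Equiv.Perm V) q⟫ = 2/3 + t.2 := by rw [hfy]; push_cast; ring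
    have ht1 : t.1 - 1 = 0 := tbound _ ((t.1:ℝ) - 1) (by push_cast; ring)
      (by rw [hx] at hx0; linarith) (by rw [hx] at hx1; linarith)
    have ht2 : t.2 = 0 := tbound t.2 (t.2:ℝ) rfl (by rw [hy] at hy0; linarith)
      (by rw [hy] at hy1; linarith)
    have : (t.1:ℝ) = 1 := by exact_mod_cast (by omega : t.1 = 1)
    rw [hx, hy] at hs1
    rw [this] at hs1
    have : (t.2:ℝ) = 0 := by exact_mod_cast ht2
    rw [this] at hs1
    linarith
  · -- A2
    exfalso
    have hx : ⟪a1, (w : Equiv.Perm V) q⟫ = 2/3 + t.1 := by rw [hfx]; push_cast; ring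
    have hy : ⟪a2, (w : Equiv.Perm V) q⟫ = -1/3 + t.2 := by rw [hfy]; push_cast; ring
    have ht1 : t.1 = 0 := tbound t.1 (t.1:ℝ) rfl (by rw [hx] at hx0; linarith)
      (by rw [hx] at hx1; linarith)
    have ht2 : t.2 - 1 = 0 := tbound _ ((t.2:ℝ) - 1) (by push_cast; ring)
      (by rw [hy] at hy0; linarith) (by rw [hy] at hy1; linarith)
    have e1 : (t.1:ℝ) = 0 := by exact_mod_cast ht1
    have e2 : (t.2:ℝ) = 1 := by exact_mod_cast (by omega : t.2 = 1)
    rw [hx, hy, e1, e2] at hs1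
    linarith
  · -- tilde reflection
    exfalso
    have hx : ⟪a1, (w : Equiv.Perm V) q⟫ = -1/3 + t.1 := by rw [hfx]; push_cast; ring
    have hy : ⟪a2, (w : Equiv.Perm V) q⟫ = -1/3 + t.2 := by rw [hfy]; push_cast; ring
    have ht1 : t.1 - 1 = 0 := tbound _ ((t.1:ℝ) - 1) (by push_cast; ring)
      (by rw [hx] at hx0; linarith) (by rw [hx] at hx1; linarith)
    have ht2 : t.2 - 1 = 0 := tbound _ ((t.2:ℝ) - 1) (by push_cast; ring)
      (by rw [hy] at hy0; linarith) (by rw [hy] at hy1; linarith)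
    have e1 : (t.1:ℝ) = 1 := by exact_mod_cast (by omega : t.1 = 1)
    have e2 : (t.2:ℝ) = 1 := by exact_mod_cast (by omega : t.2 = 1)
    rw [hx, hy, e1, e2] at hs1
    linarith
  · -- rotation R1 : t1 = 1, t2 = 0, lattice contradiction
    exfalso
    have hx : ⟪a1, (w : Equiv.Perm V) q⟫ = -2/3 + t.1 := by rw [hfx]; push_cast; ring
    have hy : ⟪a2, (w : Equiv.Perm V) q⟫ = 1/3 + t.2 := by rw [hfy]; push_cast; ring
    have ht1 : t.1 - 1 = 0 := tbound _ ((t.1:ℝ) - 1) (by push_cast; ring)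
      (by rw [hx] at hx0; linarith) (by rw [hx] at hx1; linarith)
    have ht2 : t.2 = 0 := tbound t.2 (t.2:ℝ) rfl (by rw [hy] at hy0; linarith)
      (by rw [hy] at hy1; linarith)
    omega
  · -- rotation R2 : t1 = 0, t2 = 1, lattice contradiction
    exfalso
    have hx : ⟪a1, (w : Equiv.Perm V) q⟫ = 1/3 + t.1 := by rw [hfx]; push_cast; ring
    have hy : ⟪a2, (w : Equiv.Perm V) q⟫ = -2/3 + t.2 := by rw [hfy]; push_cast; ring
    have ht1 : t.1 = 0 := tbound t.1 (t.1:ℝ) rfl (by rw [hx] at hx0; linarith)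
      (by rw [hx] at hx1; linarith)
    have ht2 : t.2 - 1 = 0 := tbound _ ((t.2:ℝ) - 1) (by push_cast; ring)
      (by rw [hy] at hy0; linarith) (by rw [hy] at hy1; linarith)
    omega

lemma floor_of_frac {c : ℝ} {n : ℤ} {f : ℝ} (hf : f = 1/3 ∨ f = 2/3)
    (h : c = (n:ℝ) + f) : ⌊c⌋ = n := by
  rcases hf with rfl | rfl
  · rw [h]; exact fl13 n
  · rw [h]; exact fl23 n

lemma floor_of_one_sub_frac {c : ℝ} {n : ℤ} {f : ℝ} (hf : f = 1/3 ∨ f = 2/3)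
    (h : c = (n:ℝ) + (1-f)) : ⌊c⌋ = n := by
  rcases hf with rfl | rfl
  · rw [h, show (1:ℝ)-1/3 = 2/3 by norm_num]; exact fl23 n
  · rw [h, show (1:ℝ)-2/3 = 1/3 by norm_num]; exact fl13 n

lemma NN_refl_a1 (h11 : ⟪a1,a1⟫ = 2) (h12 : ⟪a1,a2⟫ = -1)
    (q : V) (u r : AffWeyl a1 a2) (e : ℤ) (X Y Z : ℤ) (f g : ℝ) (hfv : f = 1/3 ∨ f = 2/3) (hgv : g = 1/3 ∨ g = 2/3)
    (hx : ⟪a1, (u : Equiv.Perm V) q⟫ = X + f) (hy : ⟪a2, (u : Equiv.Perm V) q⟫ = Y + f)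
    (hz : ⟪a1, (u : Equiv.Perm V) q⟫ + ⟪a2, (u : Equiv.Perm V) q⟫ = Z + g)
    (hr : ∀ v, (r : Equiv.Perm V) v = sRefl a1 e v) :
    NN a1 a2 q (r * u) = (2*e-1-X).natAbs + (Z-e).natAbs + (Y+e).natAbs := by
  have h21 : ⟪a2,a1⟫ = -1 := by rw [real_inner_comm]; exact h12
  have happ : ((r * u : AffWeyl a1 a2) : Equiv.Perm V) q
      = sRefl a1 e ((u : Equiv.Perm V) q) := by
    show (r : Equiv.Perm V) ((u : Equiv.Perm V) q) = _
    rw [hr]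
  have c1 : ⟪a1, ((r * u : AffWeyl a1 a2) : Equiv.Perm V) q⟫
      = ((2*e-1-X : ℤ):ℝ) + (1-f) := by
    rw [happ, inner_sRefl, h11]
    push_cast
    linear_combination -hx
  have c2 : ⟪a2, ((r * u : AffWeyl a1 a2) : Equiv.Perm V) q⟫ = ((Z-e : ℤ):ℝ) + g := by
    rw [happ, inner_sRefl, h21]
    push_cast
    linear_combination hz
  have c3 : ⟪a1, ((r * u : AffWeyl a1 a2) : Equiv.Perm V) q⟫
      + ⟪a2, ((r * u : AffWeyl a1 a2) : Equiv.Perm V) q⟫ = ((Y+e : ℤ):ℝ) + f := by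
    rw [happ, inner_sRefl, inner_sRefl, h11, h21]
    push_cast
    linear_combination hy
  rw [NN, floor_of_one_sub_frac hfv c1, floor_of_frac hgv c2, floor_of_frac hfv c3]

lemma NN_refl_a2 (h12 : ⟪a1,a2⟫ = -1) (h22 : ⟪a2,a2⟫ = 2)
    (q : V) (u r : AffWeyl a1 a2) (e : ℤ) (X Y Z : ℤ) (f g : ℝ) (hfv : f = 1/3 ∨ f = 2/3) (hgv : g = 1/3 ∨ g = 2/3)
    (hx : ⟪a1, (u : Equiv.Perm V) q⟫ = X + f) (hy : ⟪a2, (u : Equiv.Perm V) q⟫ = Y + f)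
    (hz : ⟪a1, (u : Equiv.Perm V) q⟫ + ⟪a2, (u : Equiv.Perm V) q⟫ = Z + g)
    (hr : ∀ v, (r : Equiv.Perm V) v = sRefl a2 e v) :
    NN a1 a2 q (r * u) = (Z-e).natAbs + (2*e-1-Y).natAbs + (X+e).natAbs := by
  have happ : ((r * u : AffWeyl a1 a2) : Equiv.Perm V) q
      = sRefl a2 e ((u : Equiv.Perm V) q) := by
    show (r : Equiv.Perm V) ((u : Equiv.Perm V) q) = _
    rw [hr]
  have c1 : ⟪a1, ((r * u : AffWeyl a1 a2) : Equiv.Perm V) q⟫ = ((Z-e : ℤ):ℝ) + g := by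
    rw [happ, inner_sRefl, h12]
    push_cast
    linear_combination hz
  have c2 : ⟪a2, ((r * u : AffWeyl a1 a2) : Equiv.Perm V) q⟫
      = ((2*e-1-Y : ℤ):ℝ) + (1-f) := by
    rw [happ, inner_sRefl, h22]
    push_cast
    linear_combination -hy
  have c3 : ⟪a1, ((r * u : AffWeyl a1 a2) : Equiv.Perm V) q⟫
      + ⟪a2, ((r * u : AffWeyl a1 a2) : Equiv.Perm V) q⟫ = ((X+e : ℤ):ℝ) + f := by
    rw [happ, inner_sRefl, inner_sRefl, h12, h22]
    push_cast
    linear_combination hx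
  rw [NN, floor_of_frac hgv c1, floor_of_one_sub_frac hfv c2, floor_of_frac hfv c3]

lemma NN_refl_sum (h11 : ⟪a1,a1⟫ = 2) (h22 : ⟪a2,a2⟫ = 2) (h12 : ⟪a1,a2⟫ = -1)
    (q : V) (u r : AffWeyl a1 a2) (e : ℤ) (X Y Z : ℤ) (f g : ℝ) (hfv : f = 1/3 ∨ f = 2/3) (hgv : g = 1/3 ∨ g = 2/3)
    (hx : ⟪a1, (u : Equiv.Perm V) q⟫ = X + f) (hy : ⟪a2, (u : Equiv.Perm V) q⟫ = Y + f)
    (hz : ⟪a1, (u : Equiv.Perm V) q⟫ + ⟪a2, (u : Equiv.Perm V) q⟫ = Z + g)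
    (hr : ∀ v, (r : Equiv.Perm V) v = sRefl (a1+a2) e v) :
    NN a1 a2 q (r * u) = (e-1-Y).natAbs + (e-1-X).natAbs + (2*e-1-Z).natAbs := by
  have h21 : ⟪a2,a1⟫ = -1 := by rw [real_inner_comm]; exact h12
  have e1 : ⟪a1, a1+a2⟫ = (1:ℝ) := by rw [inner_add_right, h11, h12]; norm_num
  have e2 : ⟪a2, a1+a2⟫ = (1:ℝ) := by rw [inner_add_right, h21, h22]; norm_num
  have happ : ((r * u : AffWeyl a1 a2) : Equiv.Perm V) q
      = sRefl (a1+a2) e ((u : Equiv.Perm V) q) := by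
    show (r : Equiv.Perm V) ((u : Equiv.Perm V) q) = _
    rw [hr]
  have c1 : ⟪a1, ((r * u : AffWeyl a1 a2) : Equiv.Perm V) q⟫
      = ((e-1-Y : ℤ):ℝ) + (1-f) := by
    rw [happ, inner_sRefl, e1, inner_add_left]
    push_cast
    linear_combination -hy
  have c2 : ⟪a2, ((r * u : AffWeyl a1 a2) : Equiv.Perm V) q⟫
      = ((e-1-X : ℤ):ℝ) + (1-f) := by
    rw [happ, inner_sRefl, e2, inner_add_left]
    push_cast
    linear_combination -hx
  have c3 : ⟪a1, ((r * u : AffWeyl a1 a2) : Equiv.Perm V) q⟫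
      + ⟪a2, ((r * u : AffWeyl a1 a2) : Equiv.Perm V) q⟫
      = ((2*e-1-Z : ℤ):ℝ) + (1-g) := by
    rw [happ, inner_sRefl, inner_sRefl, e1, e2, inner_add_left]
    push_cast
    linear_combination -hz
  rw [NN, floor_of_one_sub_frac hfv c1, floor_of_one_sub_frac hfv c2,
    floor_of_one_sub_frac hgv c3]

lemma NN_one (q : V) (hq1 : ⟪a1, q⟫ = 1/3) (hq2 : ⟪a2, q⟫ = 1/3) : NN a1 a2 q 1 = 0 := by
  have happ : ((1 : AffWeyl a1 a2) : Equiv.Perm V) q = q := rfl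
  have e1 : ⌊⟪a1, ((1 : AffWeyl a1 a2) : Equiv.Perm V) q⟫⌋ = 0 :=
    floor_of_frac (Or.inl rfl) (by rw [happ, hq1]; norm_num)
  have e2 : ⌊⟪a2, ((1 : AffWeyl a1 a2) : Equiv.Perm V) q⟫⌋ = 0 :=
    floor_of_frac (Or.inl rfl) (by rw [happ, hq2]; norm_num)
  have e3 : ⌊⟪a1, ((1 : AffWeyl a1 a2) : Equiv.Perm V) q⟫
      + ⟪a2, ((1 : AffWeyl a1 a2) : Equiv.Perm V) q⟫⌋ = 0 :=
    floor_of_frac (Or.inr rfl) (by rw [happ, hq1, hq2]; norm_num)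
  rw [NN, e1, e2, e3]
  rfl

lemma nn_mul_simple_le (h11 : ⟪a1,a1⟫ = 2) (h22 : ⟪a2,a2⟫ = 2) (h12 : ⟪a1,a2⟫ = -1)
    (q : V) (hq1 : ⟪a1, q⟫ = 1/3) (hq2 : ⟪a2, q⟫ = 1/3)
    {s : AffWeyl a1 a2} (hs : IsSimpleRefl a1 a2 (s : Equiv.Perm V))
    (u : AffWeyl a1 a2) : NN a1 a2 q (s * u) ≤ NN a1 a2 q u + 1 := by
  obtain ⟨X, Y, Z, f, g, hfv, hgv, hx, hy, hz, hZ, hNN⟩ :=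
    coord_floors a1 a2 h11 h22 h12 q hq1 hq2 u
  rcases hs with h | h | h
  · rw [NN_refl_a1 a1 a2 h11 h12 q u s 0 X Y Z f g hfv hgv hx hy hz h, hNN]
    omega
  · rw [NN_refl_a2 a1 a2 h12 h22 q u s 0 X Y Z f g hfv hgv hx hy hz h, hNN]
    omega
  · rw [NN_refl_sum a1 a2 h11 h22 h12 q u s 1 X Y Z f g hfv hgv hx hy hz h, hNN]
    omega

lemma nn_descent (h11 : ⟪a1,a1⟫ = 2) (h22 : ⟪a2,a2⟫ = 2) (h12 : ⟪a1,a2⟫ = -1)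
    (q : V) (hq1 : ⟪a1, q⟫ = 1/3) (hq2 : ⟪a2, q⟫ = 1/3)
    (u : AffWeyl a1 a2) (hpos : 0 < NN a1 a2 q u) :
    ∃ s : AffWeyl a1 a2, IsSimpleRefl a1 a2 (s : Equiv.Perm V) ∧
      NN a1 a2 q (s * u) + 1 = NN a1 a2 q u := by
  obtain ⟨X, Y, Z, f, g, hfv, hgv, hx, hy, hz, hZ, hNN⟩ :=
    coord_floors a1 a2 h11 h22 h12 q hq1 hq2 u
  rcases lt_or_ge X 0 with hX | hX
  · refine ⟨S1 a1 a2 h11, S1_simple a1 a2 h11, ?_⟩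
    rw [NN_refl_a1 a1 a2 h11 h12 q u (S1 a1 a2 h11) 0 X Y Z f g hfv hgv hx hy hz
      (fun _ => rfl), hNN]
    omega
  rcases lt_or_ge Y 0 with hY | hY
  · refine ⟨S2 a1 a2 h22, S2_simple a1 a2 h22, ?_⟩
    rw [NN_refl_a2 a1 a2 h12 h22 q u (S2 a1 a2 h22) 0 X Y Z f g hfv hgv hx hy hz
      (fun _ => rfl), hNN]
    omega
  rcases lt_or_ge 0 Z with hZ' | hZ'
  · refine ⟨S0 a1 a2 h11 h22 h12, S0_simple a1 a2 h11 h22 h12, ?_⟩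
    rw [NN_refl_sum a1 a2 h11 h22 h12 q u (S0 a1 a2 h11 h22 h12) 1 X Y Z f g hfv hgv
      hx hy hz (fun _ => rfl), hNN]
    omega
  · exfalso
    rw [hNN] at hpos
    omega

lemma nn_le_len (h11 : ⟪a1,a1⟫ = 2) (h22 : ⟪a2,a2⟫ = 2) (h12 : ⟪a1,a2⟫ = -1)
    (q : V) (hq1 : ⟪a1, q⟫ = 1/3) (hq2 : ⟪a2, q⟫ = 1/3) (w : AffWeyl a1 a2) :
    NN a1 a2 q w ≤ len a1 a2 w := by
  obtain ⟨l, hl, hlen, hp⟩ := len_spec a1 a2 h11 h22 h12 w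
  rw [← hlen, ← hp]
  clear hlen hp
  induction l with
  | nil => simp [NN_one a1 a2 q hq1 hq2]
  | cons s l ih =>
    rw [List.prod_cons]
    calc NN a1 a2 q (s * l.prod) ≤ NN a1 a2 q l.prod + 1 :=
          nn_mul_simple_le a1 a2 h11 h22 h12 q hq1 hq2 (hl s (by simp)) l.prod
      _ ≤ l.length + 1 := by
          have := ih (fun y hy => hl y (by simp [hy]))
          omega
      _ = (s :: l).length := by simp

lemma len_le_nn (h11 : ⟪a1,a1⟫ = 2) (h22 : ⟪a2,a2⟫ = 2) (h12 : ⟪a1,a2⟫ = -1)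
    (q : V) (hq1 : ⟪a1, q⟫ = 1/3) (hq2 : ⟪a2, q⟫ = 1/3) :
    ∀ n : ℕ, ∀ w : AffWeyl a1 a2, NN a1 a2 q w = n → len a1 a2 w ≤ n := by
  intro n
  induction n using Nat.strong_induction_on with
  | _ n ih =>
    intro w hn
    rcases Nat.eq_zero_or_pos n with rfl | hpos
    · -- w = 1
      obtain ⟨X, Y, Z, f, g, hfv, hgv, hx, hy, hz, hZ, hNN⟩ :=
        coord_floors a1 a2 h11 h22 h12 q hq1 hq2 w
      rw [hn] at hNN
      have hX : X = 0 := by omega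
      have hY : Y = 0 := by omega
      have hZv : Z = 0 := by omega
      have hf0 : 0 < f ∧ f < 1 := by rcases hfv with rfl | rfl <;> norm_num
      have hg0 : 0 < g ∧ g < 1 := by rcases hgv with rfl | rfl <;> norm_num
      have hw : w = 1 := by
        apply eq_one_of_A0 a1 a2 h11 h22 h12 q hq1 hq2 w
        · rw [hx, hX]; push_cast; linarith [hf0.1]
        · rw [hx, hX]; push_cast; linarith [hf0.2]
        · rw [hy, hY]; push_cast; linarith [hf0.1]
        · rw [hy, hY]; push_cast; linarith [hf0.2]
        · rw [hz, hZv]; push_cast; linarith [hg0.2]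
      rw [hw, len_one]
    · obtain ⟨s, hs, hdesc⟩ := nn_descent a1 a2 h11 h22 h12 q hq1 hq2 w (by omega)
      have h1 : len a1 a2 w ≤ len a1 a2 (s * w) + 1 :=
        len_self_le_mul_simple a1 a2 h11 h22 h12 hs w
      have h2 : len a1 a2 (s * w) ≤ n - 1 :=
        ih (n-1) (by omega) (s * w) (by omega)
      omega

lemma len_eq_nn (h11 : ⟪a1,a1⟫ = 2) (h22 : ⟪a2,a2⟫ = 2) (h12 : ⟪a1,a2⟫ = -1)
    (q : V) (hq1 : ⟪a1, q⟫ = 1/3) (hq2 : ⟪a2, q⟫ = 1/3) (w : AffWeyl a1 a2) :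
    len a1 a2 w = NN a1 a2 q w :=
  le_antisymm (len_le_nn a1 a2 h11 h22 h12 q hq1 hq2 (NN a1 a2 q w) w rfl)
    (nn_le_len a1 a2 h11 h22 h12 q hq1 hq2 w)

lemma half_of_near0 (c : ℝ) (h : |c| < |c - 1|) : c < 1/2 := by
  have h2 : |c|^2 < |c-1|^2 := by
    have := pow_lt_pow_left₀ h (abs_nonneg c) (n := 2) (by norm_num)
    exact this
  rw [sq_abs, sq_abs] at h2
  nlinarith

lemma half_of_near1 (c : ℝ) (h : |c - 1| < |c|) : 1/2 < c := by
  have h2 : |c-1|^2 < |c|^2 := by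
    have := pow_lt_pow_left₀ h (abs_nonneg (c-1)) (n := 2) (by norm_num)
    exact this
  rw [sq_abs, sq_abs] at h2
  nlinarith

lemma int_bound_of_notin (n : ℤ) (c hh : ℝ) (hhv : hh = 1/3 ∨ hh = 2/3)
    (hc : c = (n:ℝ) + hh) (hnot : ¬ (0 ≤ c ∧ c ≤ 1)) : n ≤ -1 ∨ 1 ≤ n := by
  by_cases h0 : 0 ≤ c
  · right
    have h1 : 1 < c := by
      by_contra hle
      exact hnot ⟨h0, by linarith⟩
    have : (0:ℝ) < n := by rcases hhv with rfl | rfl <;> (rw [hc] at h1; linarith)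
    have : (0:ℤ) < n := by exact_mod_cast this
    omega
  · left
    push_neg at h0
    have : (n:ℝ) < 0 := by rcases hhv with rfl | rfl <;> (rw [hc] at h0; linarith)
    have : n < (0:ℤ) := by exact_mod_cast this
    omega

lemma int_neg_of_lt_half (n : ℤ) (c hh : ℝ) (hhv : hh = 1/3 ∨ hh = 2/3)
    (hc : c = (n:ℝ) + hh) (hb : n ≤ -1 ∨ 1 ≤ n) (h : c < 1/2) : n ≤ -1 := by
  rcases hb with hb | hb
  · exact hb
  · exfalso
    have : (1:ℝ) ≤ n := by exact_mod_cast hb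
    rcases hhv with rfl | rfl <;> (rw [hc] at h; linarith)

lemma int_pos_of_gt_half (n : ℤ) (c hh : ℝ) (hhv : hh = 1/3 ∨ hh = 2/3)
    (hc : c = (n:ℝ) + hh) (hb : n ≤ -1 ∨ 1 ≤ n) (h : 1/2 < c) : 1 ≤ n := by
  rcases hb with hb | hb
  · exfalso
    have : (n:ℝ) ≤ -1 := by exact_mod_cast hb
    rcases hhv with rfl | rfl <;> (rw [hc] at h; linarith)
  · exact hb

end Main

/-- **Lemma.** Let `w` be non-spiral, `δ ∈ {α₁,α₂,α̃}`, and `ε ∈ {0,1}` with `H_{δ,ε}` nearer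
to `w q` than `H_{δ,1−ε}`. Then `s_{δ,ε} w < w` in the Bruhat order. -/
theorem reflect_in_nearer_hyperplane_lt
    (a1 a2 q : V)
    (hnorm1 : ⟪a1, a1⟫ = 2) (hnorm2 : ⟪a2, a2⟫ = 2) (hip : ⟪a1, a2⟫ = -1)
    (hq1 : ⟪a1, q⟫ = 1/3) (hq2 : ⟪a2, q⟫ = 1/3)
    (w : AffWeyl a1 a2) (hns : ¬ IsSpiral a1 a2 q w)
    (δ : V) (hδ : δ ∈ PosRoots a1 a2) (ε : ℤ) (hε : ε = 0 ∨ ε = 1)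
    (hnear : |⟪δ, act w q⟫ - (ε : ℝ)| < |⟪δ, act w q⟫ - (1 - (ε : ℝ))|)
    (r : AffWeyl a1 a2) (hr : ∀ v : V, act r v = sRefl δ ε v) :
    BruhatLT a1 a2 (r * w) w := by

  -- coordinates of w q
  obtain ⟨X, Y, Z, f, g, hfv, hgv, hx, hy, hz, hZrel, hNN⟩ :=
    coord_floors a1 a2 hnorm1 hnorm2 hip q hq1 hq2 w
  -- non-spiral gives integer bounds
  have hns1 : ¬ (0 ≤ ⟪a1, (w : Equiv.Perm V) q⟫ ∧ ⟪a1, (w : Equiv.Perm V) q⟫ ≤ 1) :=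
    fun h => hns (Set.mem_union_left _ (Set.mem_union_left _ h))
  have hns2 : ¬ (0 ≤ ⟪a2, (w : Equiv.Perm V) q⟫ ∧ ⟪a2, (w : Equiv.Perm V) q⟫ ≤ 1) :=
    fun h => hns (Set.mem_union_left _ (Set.mem_union_right _ h))
  have hns3 : ¬ (0 ≤ ⟪a1, (w : Equiv.Perm V) q⟫ + ⟪a2, (w : Equiv.Perm V) q⟫ ∧
      ⟪a1, (w : Equiv.Perm V) q⟫ + ⟪a2, (w : Equiv.Perm V) q⟫ ≤ 1) := by
    intro h
    apply hns
    apply Set.mem_union_right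
    show 0 ≤ ⟪a1 + a2, (w : Equiv.Perm V) q⟫ ∧ ⟪a1 + a2, (w : Equiv.Perm V) q⟫ ≤ 1
    rw [inner_add_left]
    exact h
  have hXb := int_bound_of_notin X _ f hfv hx hns1
  have hYb := int_bound_of_notin Y _ f hfv hy hns2
  have hZb := int_bound_of_notin Z _ g hgv hz hns3
  -- the reflection r is an affine reflection, hence an involution
  have hrRefl : IsAffRefl a1 a2 (r : Equiv.Perm V) := ⟨δ, Or.inl hδ, ε, fun v => hr v⟩
  have hrinv : (r : AffWeyl a1 a2)⁻¹ = r := by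
    apply Subtype.ext
    exact affrefl_inv a1 a2 hnorm1 hnorm2 hip hrRefl
  have hrr : r * r = 1 := by
    nth_rewrite 1 [← hrinv]
    exact inv_mul_cancel r
  -- main length inequality
  have hlen : len a1 a2 (r * w) < len a1 a2 w := by
    rw [len_eq_nn a1 a2 hnorm1 hnorm2 hip q hq1 hq2,
      len_eq_nn a1 a2 hnorm1 hnorm2 hip q hq1 hq2, hNN]
    rcases posroots_cases a1 a2 hδ with hd | hd | hd <;> rw [hd] at hr hnear <;>
      rcases hε with rfl | rfl
    · -- δ = a1, ε = 0 : x < 0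
      have hnear' : ⟪a1, act w q⟫ < 1/2 := by
        apply half_of_near0
        simpa using hnear
      have hX : X ≤ -1 := int_neg_of_lt_half X _ f hfv hx hXb hnear'
      rw [NN_refl_a1 a1 a2 hnorm1 hip q w r 0 X Y Z f g hfv hgv hx hy hz (fun v => hr v)]
      omega
    · -- δ = a1, ε = 1 : x > 1
      have hnear' : 1/2 < ⟪a1, act w q⟫ := by
        apply half_of_near1
        simpa using hnear
      have hX : 1 ≤ X := int_pos_of_gt_half X _ f hfv hx hXb hnear'
      rw [NN_refl_a1 a1 a2 hnorm1 hip q w r 1 X Y Z f g hfv hgv hx hy hz (fun v => hr v)]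
      omega
    · -- δ = a2, ε = 0
      have hnear' : ⟪a2, act w q⟫ < 1/2 := by
        apply half_of_near0
        simpa using hnear
      have hY : Y ≤ -1 := int_neg_of_lt_half Y _ f hfv hy hYb hnear'
      rw [NN_refl_a2 a1 a2 hip hnorm2 q w r 0 X Y Z f g hfv hgv hx hy hz (fun v => hr v)]
      omega
    · -- δ = a2, ε = 1
      have hnear' : 1/2 < ⟪a2, act w q⟫ := by
        apply half_of_near1
        simpa using hnear
      have hY : 1 ≤ Y := int_pos_of_gt_half Y _ f hfv hy hYb hnear'
      rw [NN_refl_a2 a1 a2 hip hnorm2 q w r 1 X Y Z f g hfv hgv hx hy hz (fun v => hr v)]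
      omega
    · -- δ = a1 + a2, ε = 0
      have hsum : ⟪a1 + a2, act w q⟫ = ⟪a1, (w : Equiv.Perm V) q⟫
          + ⟪a2, (w : Equiv.Perm V) q⟫ := inner_add_left _ _ _
      have hnear' : ⟪a1, (w : Equiv.Perm V) q⟫ + ⟪a2, (w : Equiv.Perm V) q⟫ < 1/2 := by
        rw [← hsum]
        apply half_of_near0
        simpa using hnear
      have hZ : Z ≤ -1 := int_neg_of_lt_half Z _ g hgv hz hZb hnear'
      rw [NN_refl_sum a1 a2 hnorm1 hnorm2 hip q w r 0 X Y Z f g hfv hgv hx hy hz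
        (fun v => hr v)]
      omega
    · -- δ = a1 + a2, ε = 1
      have hsum : ⟪a1 + a2, act w q⟫ = ⟪a1, (w : Equiv.Perm V) q⟫
          + ⟪a2, (w : Equiv.Perm V) q⟫ := inner_add_left _ _ _
      have hnear' : 1/2 < ⟪a1, (w : Equiv.Perm V) q⟫ + ⟪a2, (w : Equiv.Perm V) q⟫ := by
        rw [← hsum]
        apply half_of_near1
        simpa using hnear
      have hZ : 1 ≤ Z := int_pos_of_gt_half Z _ g hgv hz hZb hnear'
      rw [NN_refl_sum a1 a2 hnorm1 hnorm2 hip q w r 1 X Y Z f g hfv hgv hx hy hz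
        (fun v => hr v)]
      omega
  constructor
  · apply Relation.ReflTransGen.single
    refine ⟨r, hrRefl, ?_, hlen⟩
    rw [← mul_assoc, hrr, one_mul]
  · intro hcontra
    rw [hcontra] at hlen
    exact lt_irrefl _ hlen
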